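/- Let G ⊂ ℝⁿ (n ≥ 1) be a convex body containing the closed ball of radius r > 0 centered at the origin, let u ∈ 𝕊ⁿ⁻¹ be a unit vector, and let 0 < d ≤ diam(G). Then Vol(C_G(u,d)) ≥ (ω_{n−1}/n) · (r/diam(G))^{2n−1} · dⁿ, where ω_{n−1} is the Lebesgue measure of the closed unit ball in ℝⁿ⁻¹ and diam(G) := sup{|x − y| : x, y ∈ G}. -/

import Mathlib

open MeasureTheory Metric Pointwise
open scoped RealInnerProductSpace

/-- Support function `h_G(u) = sup_{x ∈ G} ⟪u, x⟫`. -/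
noncomputable def suppFn {n : ℕ} (G : Set (EuclideanSpace ℝ (Fin n)))
    (u : EuclideanSpace ℝ (Fin n)) : ℝ :=
  sSup ((fun x => ⟪u, x⟫) '' G)

/-- `min_{x ∈ G} ⟪u, x⟫`. -/
noncomputable def infFn {n : ℕ} (G : Set (EuclideanSpace ℝ (Fin n)))
    (u : EuclideanSpace ℝ (Fin n)) : ℝ :=
  sInf ((fun x => ⟪u, x⟫) '' G)

/-- The cap of `G` in direction `u` with height `h`:
`C_G(u,h) = {x ∈ G : ⟪u, x⟫ ≥ h_G(u) − h}`. -/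
noncomputable def capG {n : ℕ} (G : Set (EuclideanSpace ℝ (Fin n)))
    (u : EuclideanSpace ℝ (Fin n)) (h : ℝ) : Set (EuclideanSpace ℝ (Fin n)) :=
  {x ∈ G | suppFn G u - h ≤ ⟪u, x⟫}

lemma aux_ball (m : ℕ) :
    ENNReal.ofReal ((1/2:ℝ)^m) * volume (closedBall (0 : EuclideanSpace ℝ (Fin m)) 1)
      ≤ volume (closedBall (0 : EuclideanSpace ℝ (Fin (m+1))) 1) := by
  have hBm : volume (closedBall (0 : EuclideanSpace ℝ (Fin m)) (1/2))
      = ENNReal.ofReal ((1/2:ℝ)^m) * volume (closedBall (0 : EuclideanSpace ℝ (Fin m)) 1) := by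
    simpa [finrank_euclideanSpace, Fintype.card_fin] using
      Measure.addHaar_closedBall' volume (0 : EuclideanSpace ℝ (Fin m))
        (by norm_num : (0:ℝ) ≤ 1/2)
  set em := (MeasurableEquiv.toLp 2 (Fin m → ℝ)).symm with hem
  set en := (MeasurableEquiv.toLp 2 (Fin (m+1) → ℝ)).symm with hen
  set π : (∀ _ : Fin (m+1), ℝ) ≃ᵐ ℝ × (∀ _ : Fin m, ℝ) :=
    MeasurableEquiv.piFinSuccAbove (fun _ => ℝ) 0 with hπ
  set T : Set (ℝ × (Fin m → ℝ)) :=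
    (Set.Icc (-(1/2)) (1/2)) ×ˢ (em.symm ⁻¹' closedBall 0 (1/2)) with hT
  have hTmeas : MeasurableSet T := by
    exact (measurableSet_Icc).prod (em.symm.measurable measurableSet_closedBall)
  have hvolT : (volume : Measure (ℝ × (Fin m → ℝ))) T
      = volume (closedBall (0 : EuclideanSpace ℝ (Fin m)) (1/2)) := by
    have hmp := MeasurePreserving.symm _ (EuclideanSpace.volume_preserving_symm_measurableEquiv_toLp (Fin m))
    rw [hT, Measure.volume_eq_prod, Measure.prod_prod, Real.volume_Icc,
      hmp.measure_preimage measurableSet_closedBall.nullMeasurableSet]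
    norm_num
  have hvolS : volume (en ⁻¹' (π ⁻¹' T))
      = volume (closedBall (0 : EuclideanSpace ℝ (Fin m)) (1/2)) := by
    rw [(EuclideanSpace.volume_preserving_symm_measurableEquiv_toLp (Fin (m+1))).measure_preimage
        ((π.measurable hTmeas).nullMeasurableSet)]
    rw [(volume_preserving_piFinSuccAbove (fun _ : Fin (m+1) => ℝ) 0).measure_preimage
        hTmeas.nullMeasurableSet]
    exact hvolT
  have hsub : en ⁻¹' (π ⁻¹' T) ⊆ closedBall (0 : EuclideanSpace ℝ (Fin (m+1))) 1 := by
    intro x hx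
    simp only [Set.mem_preimage, hT, Set.mem_prod, Set.mem_Icc] at hx
    obtain ⟨⟨h1, h2⟩, h3⟩ := hx
    rw [mem_closedBall_zero_iff] at h3 ⊢
    have e1 : (π (en x)).1 = x 0 := rfl
    have e2 : ∀ j, (em.symm (π (en x)).2) j = x j.succ := fun j => rfl
    rw [e1] at h1 h2
    have hx0 : |x 0| ≤ 1/2 := abs_le.2 ⟨h1, h2⟩
    have hnorm : ‖x‖ ^ 2 = |x 0|^2 + ‖em.symm (π (en x)).2‖^2 := by
      rw [EuclideanSpace.norm_eq, EuclideanSpace.norm_eq,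
        Real.sq_sqrt (by positivity), Real.sq_sqrt (by positivity), Fin.sum_univ_succ]
      simp [e2]
    nlinarith [norm_nonneg x, norm_nonneg (em.symm (π (en x)).2), abs_nonneg (x 0)]
  calc ENNReal.ofReal ((1/2:ℝ)^m) * volume (closedBall (0 : EuclideanSpace ℝ (Fin m)) 1)
      = volume (en ⁻¹' (π ⁻¹' T)) := by rw [hvolS, hBm]
    _ ≤ _ := measure_mono hsub

theorem stmt15 {n : ℕ} (hn : 1 ≤ n) (G : Set (EuclideanSpace ℝ (Fin n)))
    (hGcv : Convex ℝ G) (hGcp : IsCompact G) (hGint : (interior G).Nonempty)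
    (r : ℝ) (hr : 0 < r) (hball : closedBall (0 : EuclideanSpace ℝ (Fin n)) r ⊆ G)
    (u : EuclideanSpace ℝ (Fin n)) (hu : ‖u‖ = 1)
    (d : ℝ) (hd : 0 < d) (hdiam : d ≤ diam G) :
    (volume (closedBall (0 : EuclideanSpace ℝ (Fin (n - 1))) 1)).toReal / n *
        (r / diam G) ^ (2 * n - 1) * d ^ n ≤ (volume (capG G u d)).toReal := by
  obtain ⟨m, rfl⟩ : ∃ m, n = m + 1 := ⟨n - 1, (Nat.succ_pred_eq_of_pos hn).symm⟩
  set D := diam G with hDdef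
  have hGb : Bornology.IsBounded G := hGcp.isBounded
  have hD : 0 < D := lt_of_lt_of_le hd hdiam
  have hD2r : 2 * r ≤ D := by
    have hmem : ∀ s : ℝ, |s| ≤ r → s • u ∈ G := by
      intro s hs
      apply hball
      rw [mem_closedBall_zero_iff, norm_smul, hu, mul_one]
      exact hs
    have h1 : r • u ∈ G := hmem r (by rw [abs_of_nonneg hr.le])
    have h2 : (-r) • u ∈ G := hmem (-r) (by rw [abs_neg, abs_of_nonneg hr.le])
    have hdd := dist_le_diam_of_mem hGb h1 h2
    rw [dist_eq_norm] at hdd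
    have heq : r • u - (-r) • u = (2*r) • u := by module
    rw [heq, norm_smul, hu, mul_one, Real.norm_eq_abs, abs_of_nonneg (by linarith)] at hdd
    exact hdd
  have hGne : G.Nonempty := hGint.mono interior_subset
  have hfc : Continuous fun x : EuclideanSpace ℝ (Fin (m+1)) => ⟪u, x⟫ :=
    continuous_const.inner continuous_id
  obtain ⟨p, hpG, hpmax⟩ := hGcp.exists_isMaxOn hGne hfc.continuousOn
  have hsupp : suppFn G u = ⟪u, p⟫ := by
    apply IsGreatest.csSup_eq
    exact ⟨Set.mem_image_of_mem _ hpG, by rintro y ⟨x, hx, rfl⟩; exact hpmax hx⟩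
  set lam := d / D with hlam
  have hlam0 : 0 ≤ lam := div_nonneg hd.le hD.le
  have hlam1 : lam ≤ 1 := (div_le_one hD).2 hdiam
  have hsub : (fun x => (p - lam • p) + lam • x) '' G ⊆ capG G u d := by
    rintro _ ⟨x, hx, rfl⟩
    show (p - lam • p) + lam • x ∈ capG G u d
    refine ⟨?_, ?_⟩
    · have heq : (p - lam • p) + lam • x = (1 - lam) • p + lam • x := by module
      rw [heq]
      exact hGcv hpG hx (by linarith) hlam0 (by ring)
    · rw [hsupp]
      have hinner : ⟪u, (p - lam • p) + lam • x⟫ = ⟪u, p⟫ - lam * (⟪u, p⟫ - ⟪u, x⟫) := by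
        simp only [inner_add_right, inner_sub_right, inner_smul_right]
        ring
      rw [hinner]
      have hpx : ⟪u, p⟫ - ⟪u, x⟫ ≤ D := by
        have hle := real_inner_le_norm u (p - x)
        rw [hu, one_mul] at hle
        have h2 : ‖p - x‖ ≤ D := by
          rw [← dist_eq_norm]; exact dist_le_diam_of_mem hGb hpG hx
        have h3 : ⟪u, p - x⟫ = ⟪u, p⟫ - ⟪u, x⟫ := inner_sub_right _ _ _
        linarith
      have hmul : lam * (⟪u, p⟫ - ⟪u, x⟫) ≤ lam * D := mul_le_mul_of_nonneg_left hpx hlam0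
      have hlD : lam * D = d := div_mul_cancel₀ d hD.ne'
      linarith
  have himg : (fun x => (p - lam • p) + lam • x) '' G = (p - lam • p) +ᵥ (lam • G) := by
    rw [← Set.image_vadd, ← Set.image_smul, Set.image_image]
    rfl
  have hvol : volume ((p - lam • p) +ᵥ (lam • G)) = ENNReal.ofReal (lam ^ (m+1)) * volume G := by
    rw [measure_vadd, Measure.addHaar_smul_of_nonneg volume hlam0, finrank_euclideanSpace,
      Fintype.card_fin]
  have hcapvol : ENNReal.ofReal (lam ^ (m+1)) * volume G ≤ volume (capG G u d) := by
    rw [← hvol, ← himg]; exact measure_mono hsub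
  have hGvol : ENNReal.ofReal (r ^ (m+1)) *
      volume (closedBall (0 : EuclideanSpace ℝ (Fin (m+1))) 1) ≤ volume G := by
    have hcb := Measure.addHaar_closedBall' volume (0 : EuclideanSpace ℝ (Fin (m+1))) hr.le
    rw [finrank_euclideanSpace, Fintype.card_fin] at hcb
    rw [← hcb]
    exact measure_mono hball
  have chain : ENNReal.ofReal (lam ^ (m+1)) * (ENNReal.ofReal (r ^ (m+1)) *
      (ENNReal.ofReal ((1/2:ℝ)^m) * volume (closedBall (0 : EuclideanSpace ℝ (Fin m)) 1)))
      ≤ volume (capG G u d) := by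
    refine le_trans (mul_le_mul_right ?_ _) hcapvol
    exact le_trans (mul_le_mul_right (aux_ball m) _) hGvol
  have hcapsub : capG G u d ⊆ G := fun x hx => hx.1
  have hfin : volume (capG G u d) ≠ ⊤ :=
    ((measure_mono hcapsub).trans_lt hGcp.measure_lt_top).ne
  have hto := ENNReal.toReal_mono hfin chain
  rw [ENNReal.toReal_mul, ENNReal.toReal_mul, ENNReal.toReal_mul,
    ENNReal.toReal_ofReal (by positivity), ENNReal.toReal_ofReal (by positivity),
    ENNReal.toReal_ofReal (by positivity)] at hto
  simp only [Nat.add_sub_cancel, Nat.add_one_sub_one]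
  set w := (volume (closedBall (0 : EuclideanSpace ℝ (Fin m)) 1)).toReal with hw
  have hw0 : 0 ≤ w := ENNReal.toReal_nonneg
  refine le_trans ?_ hto
  -- numeric inequality
  have hrD : r / D ≤ 1/2 := by
    rw [div_le_div_iff₀ hD (by norm_num : (0:ℝ) < 2)]
    linarith
  have hpow : (r/D)^m ≤ (1/2:ℝ)^m := pow_le_pow_left₀ (by positivity) hrD m
  have hN : (1:ℝ) ≤ (m+1 : ℕ) := by exact_mod_cast Nat.succ_le_succ (Nat.zero_le m)
  have hsplit : (2 * (m+1) - 1) = (m+1) + m := by omega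
  rw [hsplit, pow_add]
  have hlameq : lam ^ (m+1) = d^(m+1) / D^(m+1) := by rw [hlam, div_pow]
  have hrw : (r/D)^(m+1) = r^(m+1) / D^(m+1) := div_pow r D (m+1)
  calc w / (m+1:ℕ) * ((r/D)^(m+1) * (r/D)^m) * d^(m+1)
      = (w / (m+1:ℕ) * (r/D)^m) * ((r/D)^(m+1) * d^(m+1)) := by ring
    _ ≤ (w * (1/2:ℝ)^m) * ((r/D)^(m+1) * d^(m+1)) := by
        apply mul_le_mul_of_nonneg_right
        · exact mul_le_mul (div_le_self hw0 hN) hpow (by positivity) hw0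
        · positivity
    _ = lam ^ (m+1) * (r^(m+1) * ((1/2:ℝ)^m * w)) := by
        rw [hlameq, hrw]; ring
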